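/- arXiv:1511.03241 — 2 statements merged into one kernel-verified Lean document; each statement's English description precedes it below -/
import Mathlib

section
/- Fix p ∈ (0,1) and ε ∈ (0, 1/2). For any γ > 0 there exists δ₁ > 0 such that for all sufficiently large r, with a = r^{p−1}, the following holds: if x ∈ ℝ^K has all coordinates positive and satisfies |Σ_{k∈K} k_i x_k − ρ_i| ≤ r^{−1/2+ε}/|I| for all i ∈ I, and |χ_{k,k',i}(x)| ≤ δ₁ for all pairs of edges (k,i), (k',i) ∈ M, then L^(a)(x) − L* ≤ γ. -/
open Finset Filter

/-- `c_k = ∏_i (k_i)!`. -/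
noncomputable def confC {I : Type*} [Fintype I] (k : I → ℕ) : ℝ :=
  ∏ i, (Nat.factorial (k i) : ℝ)

/-- The Lyapunov function `L^(a)`. -/
noncomputable def Lfun {I : Type*} [Fintype I] [DecidableEq I]
    (Kbar : Finset (I → ℕ)) (a : ℝ) (x : (I → ℕ) → ℝ) : ℝ :=
  -(1 / Real.log a) *
    ∑ k ∈ Kbar.erase 0, x k * Real.log (x k * confC k / (Real.exp 1 * a))

/-- The coordinates of `x` extended by the convention `x_0 = a`. -/
def xeDef {I : Type*} [Fintype I]
    (a : ℝ) (x : (I → ℕ) → ℝ) (m : I → ℕ) : ℝ :=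
  if m = 0 then a else x m

/-- `χ_{k,k',i}(x)`, with the convention `x_0 = a`. -/
noncomputable def chiDef {I : Type*} [Fintype I] [DecidableEq I]
    (a : ℝ) (x : (I → ℕ) → ℝ) (k k' : I → ℕ) (i : I) : ℝ :=
  Real.log ((k' i : ℝ) * xeDef a x (k - Pi.single i 1) * xeDef a x k')
    - Real.log ((k i : ℝ) * xeDef a x k * xeDef a x (k' - Pi.single i 1))

/-- `(k, i)` is an edge. -/
def isEdge {I : Type*} [Fintype I] [DecidableEq I]
    (Kbar : Finset (I → ℕ)) (k : I → ℕ) (i : I) : Prop :=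
  k ∈ Kbar.erase 0 ∧ 1 ≤ k i ∧ k - Pi.single i 1 ∈ Kbar

/-- The optimal value `L*` of the linear program (LP). -/
noncomputable def LPvalue {I : Type*} [Fintype I] [DecidableEq I]
    (Kbar : Finset (I → ℕ)) (ρ : I → ℝ) : ℝ :=
  sInf {v : ℝ | ∃ x : (I → ℕ) → ℝ,
    ((∀ k ∈ Kbar.erase 0, 0 ≤ x k) ∧
      ∀ i : I, ∑ k ∈ Kbar.erase 0, (k i : ℝ) * x k = ρ i) ∧
    v = ∑ k ∈ Kbar.erase 0, x k}

section helperSec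
variable {I : Type*} [Fintype I] [DecidableEq I]


variable {I : Type*} [Fintype I] [DecidableEq I]

omit [DecidableEq I] in
lemma confC_pos (k : I → ℕ) : 0 < confC k :=
  Finset.prod_pos fun i _ => by positivity

omit [DecidableEq I] in
lemma confC_one_le (k : I → ℕ) : 1 ≤ confC k := by
  unfold confC
  calc (1:ℝ) = ∏ _i : I, (1:ℝ) := by simp
  _ ≤ ∏ i, (Nat.factorial (k i) : ℝ) := by
      apply Finset.prod_le_prod (fun i _ => by norm_num)
      intro i _
      exact_mod_cast Nat.one_le_iff_ne_zero.mpr (Nat.factorial_ne_zero (k i))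

omit [DecidableEq I] in
lemma confC_zero : confC (0 : I → ℕ) = 1 := by simp [confC]

omit [Fintype I] in
lemma single_ne_zero' (i : I) : (Pi.single i 1 : I → ℕ) ≠ 0 := by
  intro h
  have := congrFun h i
  simp at this

omit [Fintype I] in
lemma sub_single_apply (k : I → ℕ) (i j : I) :
    (k - Pi.single i 1 : I → ℕ) j = k j - (Pi.single i 1 : I → ℕ) j := rfl

lemma confC_succ (k : I → ℕ) (i : I) (h : 1 ≤ k i) :
    confC k = (k i : ℝ) * confC (k - Pi.single i 1) := by
  set k' : I → ℕ := k - Pi.single i 1 with hk'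
  have hprod : ∏ j ∈ univ.erase i, ((Nat.factorial (k' j)) : ℝ)
      = ∏ j ∈ univ.erase i, ((Nat.factorial (k j)) : ℝ) := by
    apply Finset.prod_congr rfl
    intro j hj
    rw [hk', sub_single_apply, Pi.single_eq_of_ne (Finset.mem_erase.mp hj).1]
    simp
  have hfact : ((Nat.factorial (k i)) : ℝ) = (k i : ℝ) * (Nat.factorial (k' i) : ℝ) := by
    have hki : k' i = k i - 1 := by rw [hk', sub_single_apply]; simp
    obtain ⟨n, hn⟩ : ∃ n, k i = n + 1 := ⟨k i - 1, by omega⟩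
    rw [hki, hn]
    simp [Nat.factorial_succ]
  unfold confC
  rw [← Finset.mul_prod_erase univ (fun j => ((Nat.factorial (k j) : ℝ))) (mem_univ i),
    ← Finset.mul_prod_erase univ (fun j => ((Nat.factorial (k' j) : ℝ))) (mem_univ i),
    hprod, hfact, mul_assoc]

omit [Fintype I] [DecidableEq I] in
lemma exists_pos_of_ne_zero {k : I → ℕ} (h : k ≠ 0) : ∃ i, 1 ≤ k i := by
  by_contra hc
  push_neg at hc
  exact h (funext fun i => by have := hc i; simp only [Pi.zero_apply]; omega)

omit [Fintype I] in
lemma sub_single_le (k : I → ℕ) (i : I) : ∀ j, (k - Pi.single i 1 : I → ℕ) j ≤ k j := by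
  intro j; rw [sub_single_apply]; omega

omit [Fintype I] in
lemma single_sub_single (i : I) : (Pi.single i 1 : I → ℕ) - Pi.single i 1 = 0 := by
  funext j
  rw [sub_single_apply]
  simp

omit [Fintype I] in
lemma add_single_cancel {k : I → ℕ} {i : I} (h : 1 ≤ k i) :
    ∀ j, (k - Pi.single i 1 : I → ℕ) j + (Pi.single i 1 : I → ℕ) j = k j := by
  intro j
  rw [sub_single_apply]
  by_cases hj : j = i
  · subst hj; simp; omega
  · simp [Pi.single_eq_of_ne hj]

lemma sum_single_mul (i : I) (t : I → ℝ) :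
    ∑ j, ((Pi.single i 1 : I → ℕ) j : ℝ) * t j = t i := by
  rw [Finset.sum_eq_single i]
  · simp
  · intro j _ hj; rw [Pi.single_eq_of_ne hj]; simp
  · intro h; exact absurd (mem_univ i) h

lemma sum_sub_single (k : I → ℕ) (i : I) (h : 1 ≤ k i) (t : I → ℝ) :
    ∑ j, ((k j : ℝ)) * t j = (∑ j, (((k - Pi.single i 1 : I → ℕ) j : ℝ)) * t j) + t i := by
  rw [← sum_single_mul i t, ← Finset.sum_add_distrib]
  apply Finset.sum_congr rfl
  intro j _
  rw [← add_mul]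
  congr 1
  rw [← Nat.cast_add, add_single_cancel h]

lemma sum_coords_sub (k : I → ℕ) (i : I) (h : 1 ≤ k i) :
    (∑ j, (k - Pi.single i 1 : I → ℕ) j) + 1 = ∑ j, k j := by
  have h1 : ∀ j ∈ univ, (k - Pi.single i 1 : I → ℕ) j + (Pi.single i 1 : I → ℕ) j = k j :=
    fun j _ => add_single_cancel h j
  have h2 := Finset.sum_congr rfl h1
  rw [Finset.sum_add_distrib] at h2
  have h3 : ∑ j, (Pi.single i 1 : I → ℕ) j = 1 := by
    rw [Finset.sum_eq_single i]
    · simp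
    · intro j _ hj; rw [Pi.single_eq_of_ne hj]
    · intro h; exact absurd (mem_univ i) h
  have h4 : univ.sum k = ∑ j, k j := rfl
  rw [h4] at h2
  omega



noncomputable def thetaDef (a : ℝ) (x : (I → ℕ) → ℝ) (k : I → ℕ) : ℝ :=
  Real.log (xeDef a x k * confC k / a)
    - ∑ i, (k i : ℝ) * Real.log (x (Pi.single i 1) / a)

lemma ne_zero_of_one_le {k : I → ℕ} {i : I} (h : 1 ≤ k i) : k ≠ 0 := by
  intro h0
  rw [h0] at h
  simp at h

lemma theta_step (a : ℝ) (ha : 0 < a) (x : (I → ℕ) → ℝ) (k : I → ℕ) (i : I) (h1 : 1 ≤ k i)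
    (hxk : 0 < x k) (hxk' : 0 < xeDef a x (k - Pi.single i 1))
    (hy : 0 < x (Pi.single i 1)) :
    thetaDef a x k = thetaDef a x (k - Pi.single i 1) - chiDef a x k (Pi.single i 1) i := by
  have hk0 : k ≠ 0 := ne_zero_of_one_le h1
  set k' : I → ℕ := k - Pi.single i 1 with hk'
  have hn : (0:ℝ) < (k i : ℝ) := by exact_mod_cast h1
  have hc' : 0 < confC k' := confC_pos k'
  -- simplify chi
  have hchi : chiDef a x k (Pi.single i 1) i
      = (Real.log (xeDef a x k') + Real.log (x (Pi.single i 1)))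
        - (Real.log (k i : ℝ) + Real.log (x k) + Real.log a) := by
    unfold chiDef
    rw [single_sub_single]
    have e0 : xeDef a x (0 : I → ℕ) = a := by simp [xeDef]
    have e1 : xeDef a x (Pi.single i 1) = x (Pi.single i 1) := by
      simp [xeDef, single_ne_zero' i]
    have e2 : xeDef a x k = x k := by simp [xeDef, hk0]
    rw [e0, e1, e2]
    have e3 : ((Pi.single i 1 : I → ℕ) i : ℝ) = 1 := by simp
    rw [e3, one_mul]
    rw [Real.log_mul (ne_of_gt hxk') (ne_of_gt hy),
      Real.log_mul (by positivity) (ne_of_gt ha),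
      Real.log_mul (ne_of_gt hn) (ne_of_gt hxk)]
  -- expand thetas
  have e2 : xeDef a x k = x k := by simp [xeDef, hk0]
  have et1 : thetaDef a x k
      = Real.log (x k) + Real.log (k i : ℝ) + Real.log (confC k') - Real.log a
        - ((∑ j, ((k' j : ℝ)) * Real.log (x (Pi.single j 1) / a))
          + (Real.log (x (Pi.single i 1)) - Real.log a)) := by
    unfold thetaDef
    rw [e2, confC_succ k i h1, ← hk']
    rw [sum_sub_single k i h1]
    rw [Real.log_div (by positivity) (ne_of_gt ha),
      Real.log_mul (ne_of_gt hxk) (by positivity),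
      Real.log_mul (ne_of_gt hn) (ne_of_gt hc'),
      Real.log_div (ne_of_gt hy) (ne_of_gt ha)]
    ring
  have et2 : thetaDef a x k'
      = Real.log (xeDef a x k') + Real.log (confC k') - Real.log a
        - ∑ j, ((k' j : ℝ)) * Real.log (x (Pi.single j 1) / a) := by
    unfold thetaDef
    rw [Real.log_div (by positivity) (ne_of_gt ha),
      Real.log_mul (ne_of_gt hxk') (ne_of_gt hc')]
  rw [et1, et2, hchi]
  ring


lemma theta_bound (Kbar : Finset (I → ℕ))
    (h0 : (0 : I → ℕ) ∈ Kbar)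
    (hunit : ∀ i : I, Pi.single i 1 ∈ Kbar)
    (hmono : ∀ k ∈ Kbar, ∀ k' : I → ℕ, (∀ i, k' i ≤ k i) → k' ∈ Kbar)
    (a : ℝ) (ha : 0 < a)
    (x : (I → ℕ) → ℝ) (hx : ∀ k ∈ Kbar.erase 0, 0 < x k)
    (δ : ℝ) (hδ : 0 ≤ δ)
    (hchi : ∀ i : I, ∀ k k' : I → ℕ, isEdge Kbar k i → isEdge Kbar k' i →
      |chiDef a x k k' i| ≤ δ) :
    ∀ k ∈ Kbar, |thetaDef a x k| ≤ (∑ i, k i : ℕ) * δ := by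
  suffices H : ∀ n : ℕ, ∀ k : I → ℕ, k ∈ Kbar → ∑ i, k i = n → |thetaDef a x k| ≤ n * δ by
    intro k hk
    exact H _ k hk rfl
  intro n
  induction n using Nat.strong_induction_on with
  | _ n ih =>
    intro k hk hn
    by_cases hk0 : k = 0
    · subst hk0
      have : thetaDef a x 0 = 0 := by
        unfold thetaDef
        rw [confC_zero]
        have : xeDef a x (0 : I → ℕ) = a := by simp [xeDef]
        rw [this]
        rw [mul_one, div_self (ne_of_gt ha), Real.log_one]
        simp
      rw [this, abs_zero]
      positivity
    · obtain ⟨i, hi⟩ := exists_pos_of_ne_zero hk0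
      set k' : I → ℕ := k - Pi.single i 1 with hk'def
      have hk'mem : k' ∈ Kbar := hmono k hk k' (sub_single_le k i)
      have hkK : k ∈ Kbar.erase 0 := Finset.mem_erase.mpr ⟨hk0, hk⟩
      have hxk : 0 < x k := hx k hkK
      have hxk' : 0 < xeDef a x k' := by
        by_cases h : k' = 0
        · simp [xeDef, h, ha]
        · simpa [xeDef, h] using hx k' (Finset.mem_erase.mpr ⟨h, hk'mem⟩)
      have hy : 0 < x (Pi.single i 1) := by
        apply hx
        exact Finset.mem_erase.mpr ⟨single_ne_zero' i, hunit i⟩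
      have hedge1 : isEdge Kbar k i := ⟨hkK, hi, hk'mem⟩
      have hedge2 : isEdge Kbar (Pi.single i 1) i := by
        refine ⟨Finset.mem_erase.mpr ⟨single_ne_zero' i, hunit i⟩, by simp, ?_⟩
        have : (Pi.single i 1 : I → ℕ) - Pi.single i 1 = 0 := by
          funext j; simp
        rw [this]; exact h0
      have hstep := theta_step a ha x k i hi hxk hxk' hy
      have hchib := hchi i k (Pi.single i 1) hedge1 hedge2
      have hsum := sum_coords_sub k i hi
      rw [← hk'def] at hsum
      have hn' : ∑ j, k' j < n := by omega
      have ihk' := ih _ hn' k' hk'mem rfl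
      calc |thetaDef a x k| = |thetaDef a x k' - chiDef a x k (Pi.single i 1) i| := by rw [hstep]
      _ ≤ |thetaDef a x k'| + |chiDef a x k (Pi.single i 1) i| := abs_sub _ _
      _ ≤ (∑ j, k' j) * δ + δ := add_le_add ihk' hchib
      _ = ((∑ j, k' j : ℕ) + 1 : ℕ) * δ := by push_cast; ring
      _ = (n : ℝ) * δ := by rw [hsum, hn]


lemma LP_lower (Kbar : Finset (I → ℕ))
    (hunit : ∀ i : I, Pi.single i 1 ∈ Kbar)
    (ρ : I → ℝ) (hρ : ∀ i, 0 ≤ ρ i) (q' : I → ℝ)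
    (hfeas : ∀ k ∈ Kbar.erase 0, ∑ i, (k i : ℝ) * q' i ≤ 1) :
    ∑ i, ρ i * q' i ≤ LPvalue Kbar ρ := by
  set K := Kbar.erase 0 with hK
  have hsingle_mem : ∀ j : I, Pi.single j 1 ∈ K :=
    fun j => Finset.mem_erase.mpr ⟨single_ne_zero' j, hunit j⟩
  -- nonemptiness witness
  have hne : {v : ℝ | ∃ x : (I → ℕ) → ℝ,
      ((∀ k ∈ K, 0 ≤ x k) ∧ ∀ i : I, ∑ k ∈ K, (k i : ℝ) * x k = ρ i) ∧
      v = ∑ k ∈ K, x k}.Nonempty := by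
    classical
    refine ⟨∑ k ∈ K, (fun k => ∑ j, if k = Pi.single j 1 then ρ j else 0) k,
      (fun k => ∑ j, if k = Pi.single j 1 then ρ j else 0), ⟨⟨?_, ?_⟩, rfl⟩⟩
    · intro k _
      apply Finset.sum_nonneg
      intro j _
      split <;> simp [hρ j]
    · intro i
      have hterm : ∀ k ∈ K, (k i : ℝ) * (∑ j, if k = Pi.single j 1 then ρ j else 0)
          = ∑ j, (if k = Pi.single j 1 then (k i : ℝ) * ρ j else 0) := by
        intro k _
        rw [Finset.mul_sum]
        exact Finset.sum_congr rfl fun j _ => by split <;> simp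
      rw [Finset.sum_congr rfl hterm, Finset.sum_comm]
      have hinner : ∀ j : I, (∑ k ∈ K, if k = Pi.single j 1 then (k i : ℝ) * ρ j else 0)
          = ((Pi.single j 1 : I → ℕ) i : ℝ) * ρ j := by
        intro j
        rw [Finset.sum_ite_eq' K (Pi.single j 1) (fun k => (k i : ℝ) * ρ j)]
        simp [hsingle_mem j]
      rw [Finset.sum_congr rfl fun j _ => hinner j]
      have : ∀ j : I, ((Pi.single j 1 : I → ℕ) i : ℝ) * ρ j
          = if i = j then ρ j else 0 := by
        intro j
        rcases eq_or_ne i j with h | h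
        · subst h; simp
        · simp [Pi.single_apply, h]
      rw [Finset.sum_congr rfl fun j _ => this j, Finset.sum_ite_eq univ i ρ]
      simp
  apply le_csInf hne
  rintro v ⟨z, ⟨hz0, hzc⟩, rfl⟩
  calc ∑ i, ρ i * q' i = ∑ i, (∑ k ∈ K, (k i : ℝ) * z k) * q' i := by
        exact Finset.sum_congr rfl fun i _ => by rw [hzc i]
  _ = ∑ i, ∑ k ∈ K, z k * ((k i : ℝ) * q' i) := by
        exact Finset.sum_congr rfl fun i _ => by
          rw [Finset.sum_mul]
          exact Finset.sum_congr rfl fun k _ => by ring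
  _ = ∑ k ∈ K, ∑ i, z k * ((k i : ℝ) * q' i) := Finset.sum_comm
  _ = ∑ k ∈ K, z k * (∑ i, (k i : ℝ) * q' i) := by
        exact Finset.sum_congr rfl fun k _ => by rw [Finset.mul_sum]
  _ ≤ ∑ k ∈ K, z k * 1 :=
        Finset.sum_le_sum fun k hk => mul_le_mul_of_nonneg_left (hfeas k hk) (hz0 k hk)
  _ = ∑ k ∈ K, z k := by simp

set_option maxHeartbeats 1600000 in
lemma main_bound [Nonempty I] (Kbar : Finset (I → ℕ))
    (h0 : (0 : I → ℕ) ∈ Kbar)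
    (hunit : ∀ i : I, Pi.single i 1 ∈ Kbar)
    (hmono : ∀ k ∈ Kbar, ∀ k' : I → ℕ, (∀ i, k' i ≤ k i) → k' ∈ Kbar)
    (ρ : I → ℝ) (hρ : ∀ i, 0 < ρ i) :
    ∃ C1 C2 : ℝ, ∀ a b η : ℝ, 1 ≤ b → a = Real.exp (-b) →
      0 ≤ η → (∀ i, 2 * η ≤ ρ i) →
      ∀ x : (I → ℕ) → ℝ, (∀ k ∈ Kbar.erase 0, 0 < x k) →
      (∀ i : I, |∑ k ∈ Kbar.erase 0, (k i : ℝ) * x k - ρ i| ≤ η) →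
      (∀ i : I, ∀ k k' : I → ℕ, isEdge Kbar k i → isEdge Kbar k' i →
        |chiDef a x k k' i| ≤ 1) →
      Lfun Kbar a x - LPvalue Kbar ρ ≤ C1 / b + C2 * η := by
  classical
  set K := Kbar.erase 0 with hKdef
  set S : ℝ := ∑ i, ρ i with hSdef
  set B : ℝ := 2 * S + 1 with hBdef
  set N : ℕ := K.card with hNdef
  set m : ℕ := Kbar.sup (fun k => ∑ i, k i) with hmdef
  set ρmin : ℝ := univ.inf' univ_nonempty ρ with hρmindef
  set cm : ℝ := (Fintype.card I) * Real.log (Nat.factorial m) with hcmdef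
  set c3 : ℝ := |Real.log (ρmin / (2 * N * m))| + m * (1 + Real.log B) with hc3def
  set Q : ℝ := 1 + Real.log B + m + c3 with hQdef
  refine ⟨N * B * (m + 1) + (Real.log B + cm + m) * S, (Fintype.card I) * Q, ?_⟩
  intro a b η hb ha hη0 hη2 x hx hcons hchi
  -- basic facts
  have hb0 : (0:ℝ) < b := lt_of_lt_of_le one_pos hb
  have ha0 : 0 < a := by rw [ha]; exact Real.exp_pos _
  have hloga : Real.log a = -b := by rw [ha, Real.log_exp]
  have hS : 0 < S := Finset.sum_pos (fun i _ => hρ i) univ_nonempty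
  have hρS : ∀ i, ρ i ≤ S := fun i =>
    Finset.single_le_sum (fun j _ => le_of_lt (hρ j)) (mem_univ i)
  have hηS : η ≤ S := by
    obtain ⟨i⟩ := ‹Nonempty I›
    have := hη2 i; have := hρS i; linarith
  have hB1 : (1:ℝ) ≤ B := by rw [hBdef]; linarith
  have hlogB : 0 ≤ Real.log B := Real.log_nonneg hB1
  have hsingle_mem : ∀ i : I, Pi.single i 1 ∈ K :=
    fun i => Finset.mem_erase.mpr ⟨single_ne_zero' i, hunit i⟩
  have hKne : K.Nonempty := ⟨_, hsingle_mem (Classical.arbitrary I)⟩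
  have hN1 : 1 ≤ N := Finset.card_pos.mpr hKne
  have hsum_single : ∀ i : I, ∑ j, (Pi.single i 1 : I → ℕ) j = 1 := by
    intro i
    rw [Finset.sum_eq_single i]
    · simp
    · intro j _ hj; rw [Pi.single_eq_of_ne hj]
    · intro h; exact absurd (mem_univ i) h
  have hm : ∀ k ∈ Kbar, (∑ i, k i) ≤ m := fun k hk => Finset.le_sup hk
  have hm1 : 1 ≤ m := by
    have := hm _ (hunit (Classical.arbitrary I))
    rwa [hsum_single] at this
  have hρmin : 0 < ρmin := by
    rw [hρmindef]
    exact (Finset.lt_inf'_iff _).mpr (fun i _ => hρ i)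
  have hρminle : ∀ i, ρmin ≤ ρ i := fun i => Finset.inf'_le _ (mem_univ i)
  -- conservation quantities
  set ρh : I → ℝ := fun i => ∑ k ∈ K, (k i : ℝ) * x k with hρhdef
  have hρh_ub : ∀ i, ρh i ≤ B := by
    intro i
    have h1 := (abs_le.mp (hcons i)).2
    have := hη2 i
    rw [hBdef]
    have := hρS i
    simp only [hρhdef]
    linarith [hηS]
  have hρh_lb : ∀ i, ρ i / 2 ≤ ρh i := by
    intro i
    have h1 := (abs_le.mp (hcons i)).1
    have := hη2 i
    simp only [hρhdef]
    linarith
  have hxB : ∀ k ∈ K, x k ≤ B := by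
    intro k hk
    obtain ⟨hk0, hkK⟩ := Finset.mem_erase.mp hk
    obtain ⟨i, hi⟩ := exists_pos_of_ne_zero hk0
    have hterm : x k ≤ (k i : ℝ) * x k := by
      have h1 : (1:ℝ) ≤ (k i : ℝ) := by exact_mod_cast hi
      nlinarith [hx k hk]
    have hsum : (k i : ℝ) * x k ≤ ρh i := by
      apply Finset.single_le_sum (f := fun k' => (k' i : ℝ) * x k') ?_ hk
      intro k' hk'
      exact mul_nonneg (Nat.cast_nonneg _) (le_of_lt (hx k' hk'))
    exact le_trans hterm (le_trans hsum (hρh_ub i))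
  set y : I → ℝ := fun i => x (Pi.single i 1) with hydef
  have hy_pos : ∀ i, 0 < y i := fun i => hx _ (hsingle_mem i)
  have hyB : ∀ i, y i ≤ B := fun i => hxB _ (hsingle_mem i)
  -- theta
  set θ : (I → ℕ) → ℝ := thetaDef a x with hθdef
  have hθb : ∀ k ∈ Kbar, |θ k| ≤ m := by
    intro k hk
    have := theta_bound Kbar h0 hunit hmono a ha0 x hx 1 zero_le_one hchi k hk
    rw [mul_one] at this
    refine le_trans this ?_
    exact_mod_cast hm k hk
  have hlogx : ∀ k ∈ K, Real.log (x k)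
      = θ k - Real.log (confC k) + Real.log a
        + ∑ j, (k j : ℝ) * Real.log (y j / a) := by
    intro k hk
    obtain ⟨hk0, hkK⟩ := Finset.mem_erase.mp hk
    have he : xeDef a x k = x k := by simp [xeDef, hk0]
    have : θ k = Real.log (x k * confC k / a)
        - ∑ j, (k j : ℝ) * Real.log (y j / a) := by
      rw [hθdef]; unfold thetaDef; rw [he]
    rw [Real.log_div (ne_of_gt (mul_pos (hx k hk) (confC_pos k))) (ne_of_gt ha0),
      Real.log_mul (ne_of_gt (hx k hk)) (ne_of_gt (confC_pos k))] at this
    linarith [this]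
  have hlog_quot : ∀ j, Real.log (y j / a) = Real.log (y j) + b := by
    intro j
    rw [Real.log_div (ne_of_gt (hy_pos j)) (ne_of_gt ha0), hloga]
    ring
  -- lower bound on y
  have hylb : ∀ i, -(c3 + m * b) ≤ Real.log (y i) := by
    intro i
    set lw : ℝ := m * (1 + Real.log B + b) with hlwdef
    have hlbb : (0:ℝ) ≤ Real.log B + b := by linarith
    have hxky : ∀ k ∈ K, 1 ≤ k i → Real.log (x k) ≤ Real.log (y i) + lw := by
      intro k hk hki
      have hkK : k ∈ Kbar := Finset.mem_of_mem_erase hk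
      have h1 := hlogx k hk
      rw [sum_sub_single k i hki (fun j => Real.log (y j / a))] at h1
      have hθk : θ k ≤ m := le_of_abs_le (hθb k hkK)
      have hck : 0 ≤ Real.log (confC k) := Real.log_nonneg (confC_one_le k)
      have hsumb : ∑ j, (((k - Pi.single i 1 : I → ℕ) j : ℝ)) * Real.log (y j / a)
          ≤ m * (Real.log B + b) := by
        calc ∑ j, (((k - Pi.single i 1 : I → ℕ) j : ℝ)) * Real.log (y j / a)
            ≤ ∑ j, (((k - Pi.single i 1 : I → ℕ) j : ℝ)) * (Real.log B + b) := by
              apply Finset.sum_le_sum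
              intro j _
              apply mul_le_mul_of_nonneg_left ?_ (Nat.cast_nonneg _)
              rw [hlog_quot j]
              have : Real.log (y j) ≤ Real.log B := Real.log_le_log (hy_pos j) (hyB j)
              linarith
        _ = (∑ j, (((k - Pi.single i 1 : I → ℕ) j : ℝ))) * (Real.log B + b) := by
              rw [← Finset.sum_mul]
        _ ≤ (m : ℝ) * (Real.log B + b) := by
              apply mul_le_mul_of_nonneg_right ?_ hlbb
              have hle : (∑ j, (k - Pi.single i 1 : I → ℕ) j) ≤ m := by
                calc (∑ j, (k - Pi.single i 1 : I → ℕ) j) ≤ ∑ j, k j :=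
                      Finset.sum_le_sum (fun j _ => sub_single_le k i j)
                _ ≤ m := hm k hkK
              exact_mod_cast hle
      rw [hlog_quot i, hloga] at h1
      rw [hlwdef]
      linarith
    have hW : ∀ k ∈ K, (k i : ℝ) * x k ≤ (m : ℝ) * (y i * Real.exp lw) := by
      intro k hk
      by_cases hki : 1 ≤ k i
      · have hxk := hx k hk
        have h1 : x k ≤ y i * Real.exp lw := by
          calc x k = Real.exp (Real.log (x k)) := (Real.exp_log hxk).symm
          _ ≤ Real.exp (Real.log (y i) + lw) := Real.exp_le_exp.mpr (hxky k hk hki)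
          _ = y i * Real.exp lw := by rw [Real.exp_add, Real.exp_log (hy_pos i)]
        have h2 : (k i : ℝ) ≤ (m : ℝ) := by
          have : k i ≤ m := le_trans
            (Finset.single_le_sum (f := fun j => k j) (fun _ _ => Nat.zero_le _) (mem_univ i))
            (hm k (Finset.mem_of_mem_erase hk))
          exact_mod_cast this
        exact mul_le_mul h2 h1 (le_of_lt hxk) (Nat.cast_nonneg m)
      · have hki0 : k i = 0 := by push_neg at hki; exact Nat.lt_one_iff.mp hki
        have hz : ((k i : ℕ) : ℝ) = 0 := by rw [hki0]; norm_num
        rw [hz, zero_mul]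
        have := hy_pos i
        positivity
    have hm0 : (0:ℝ) < (m:ℝ) := by exact_mod_cast hm1
    have hN0 : (0:ℝ) < (N:ℝ) := by exact_mod_cast hN1
    have hsum2 : ρ i / 2 ≤ (N : ℝ) * ((m : ℝ) * (y i * Real.exp lw)) := by
      refine le_trans (hρh_lb i) ?_
      refine le_trans (Finset.sum_le_sum hW) ?_
      rw [Finset.sum_const, nsmul_eq_mul, ← hNdef]
    have hyi : ρmin / (2 * N * m * Real.exp lw) ≤ y i := by
      rw [div_le_iff₀ (by positivity)]
      have h6 : ρmin ≤ ρ i := hρminle i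
      nlinarith [Real.exp_pos lw, hy_pos i]
    have h7 : Real.log (ρmin / (2 * N * m * Real.exp lw)) ≤ Real.log (y i) :=
      Real.log_le_log (by positivity) hyi
    have h8 : ρmin / (2 * N * m * Real.exp lw) = (ρmin / (2 * N * m)) / Real.exp lw := by
      rw [div_div]
    rw [h8, Real.log_div (by positivity) (ne_of_gt (Real.exp_pos lw)), Real.log_exp] at h7
    have h9 : -|Real.log (ρmin / (2 * N * m))| ≤ Real.log (ρmin / (2 * N * m)) :=
      neg_abs_le _
    rw [hc3def]
    have hmb : (m:ℝ) * (1 + Real.log B + b) = (m:ℝ) * (1 + Real.log B) + m * b := by ring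
    rw [hlwdef] at h7
    linarith
  -- q and its bounds
  set q : I → ℝ := fun i => 1 + Real.log (y i) / b with hqdef
  have hqub : ∀ i, q i ≤ 1 + Real.log B := by
    intro i
    have h1 : Real.log (y i) ≤ Real.log B := Real.log_le_log (hy_pos i) (hyB i)
    have h2 : Real.log (y i) / b ≤ Real.log B / b := by gcongr
    have h3 : Real.log B / b ≤ Real.log B := by
      rw [div_le_iff₀ hb0]; nlinarith
    simp only [hqdef]; linarith
  have hc3 : 0 ≤ c3 := by
    rw [hc3def]
    have h1 : (0:ℝ) ≤ m * (1 + Real.log B) :=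
      mul_nonneg (Nat.cast_nonneg m) (by linarith)
    exact add_nonneg (abs_nonneg _) h1
  have hqlb : ∀ i, -(c3 + m) ≤ q i := by
    intro i
    have h1 := hylb i
    have h2 : -(c3 + m * b) / b ≤ Real.log (y i) / b := by gcongr
    have h4 : -(c3 + m * b) / b = -(c3 / b) - m := by field_simp; ring
    have h5 : c3 / b ≤ c3 := by
      rw [div_le_iff₀ hb0]; nlinarith
    simp only [hqdef]
    rw [h4] at h2
    linarith
  have hqabs : ∀ i, |q i| ≤ Q := by
    intro i
    have hm0 : (0:ℝ) ≤ (m:ℝ) := Nat.cast_nonneg m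
    rw [abs_le, hQdef]
    constructor
    · have := hqlb i; linarith [hlogB]
    · have := hqub i; linarith
  -- Step 5: identity for Lfun
  have hterm5 : ∀ k ∈ K, x k * Real.log (x k * confC k / (Real.exp 1 * a))
      = x k * (θ k - 1) + ∑ j, (Real.log (y j) + b) * ((k j : ℝ) * x k) := by
    intro k hk
    have hxk := hx k hk
    have hlog : Real.log (x k * confC k / (Real.exp 1 * a))
        = θ k - 1 + ∑ j, (k j : ℝ) * (Real.log (y j) + b) := by
      rw [Real.log_div (ne_of_gt (mul_pos hxk (confC_pos k)))
          (ne_of_gt (mul_pos (Real.exp_pos 1) ha0)),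
        Real.log_mul (ne_of_gt hxk) (ne_of_gt (confC_pos k)),
        Real.log_mul (ne_of_gt (Real.exp_pos 1)) (ne_of_gt ha0), Real.log_exp, hloga]
      have h1 := hlogx k hk
      rw [hloga] at h1
      have h2 : ∑ j, (k j : ℝ) * Real.log (y j / a)
          = ∑ j, (k j : ℝ) * (Real.log (y j) + b) :=
        Finset.sum_congr rfl fun j _ => by rw [hlog_quot j]
      rw [h2] at h1
      linarith
    rw [hlog, mul_add, Finset.mul_sum]
    congr 1
    exact Finset.sum_congr rfl fun j _ => by ring
  have hLsum : ∑ k ∈ K, x k * Real.log (x k * confC k / (Real.exp 1 * a))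
      = (∑ k ∈ K, x k * (θ k - 1)) + ∑ j, (Real.log (y j) + b) * ρh j := by
    rw [Finset.sum_congr rfl hterm5, Finset.sum_add_distrib]
    congr 1
    rw [Finset.sum_comm]
    exact Finset.sum_congr rfl fun j _ => by
      rw [← Finset.mul_sum]
  have hLfun : Lfun Kbar a x
      = (1 / b) * (∑ k ∈ K, x k * (θ k - 1)) + ∑ j, ρh j * q j := by
    unfold Lfun
    rw [← hKdef, hloga, hLsum]
    have hngb : -(1 / -b) = 1 / b := by ring
    rw [hngb, mul_add]
    congr 1
    rw [Finset.mul_sum]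
    refine Finset.sum_congr rfl fun j _ => ?_
    simp only [hqdef]
    field_simp
    ring
  -- Step 6: approximate dual feasibility
  set t : ℝ := (Real.log B + cm + m) / b with htdef
  have hfm1 : (1:ℝ) ≤ (Nat.factorial m : ℝ) := by
    exact_mod_cast Nat.one_le_iff_ne_zero.mpr (Nat.factorial_ne_zero m)
  have hcm0 : 0 ≤ cm := by
    rw [hcmdef]
    exact mul_nonneg (Nat.cast_nonneg _) (Real.log_nonneg hfm1)
  have ht0 : 0 ≤ t := by
    rw [htdef]
    apply div_nonneg ?_ (le_of_lt hb0)
    have : (0:ℝ) ≤ (m:ℝ) := Nat.cast_nonneg m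
    linarith
  have hck : ∀ k ∈ Kbar, Real.log (confC k) ≤ cm := by
    intro k hk
    unfold confC
    rw [Real.log_prod (fun i _ => by positivity)]
    calc ∑ i, Real.log ((Nat.factorial (k i) : ℝ))
        ≤ ∑ _i : I, Real.log ((Nat.factorial m : ℝ)) := by
          apply Finset.sum_le_sum
          intro i _
          apply Real.log_le_log (by positivity)
          have hkim : k i ≤ m := le_trans
            (Finset.single_le_sum (f := fun j => k j) (fun _ _ => Nat.zero_le _) (mem_univ i))
            (hm k hk)
          exact_mod_cast Nat.factorial_le hkim
    _ = cm := by
          rw [Finset.sum_const, Finset.card_univ, nsmul_eq_mul, hcmdef]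
  have hdual : ∀ k ∈ K, ∑ i', (k i' : ℝ) * q i' ≤ 1 + t := by
    intro k hk
    have h1 : ∑ i', (k i' : ℝ) * q i'
        = (1 / b) * ∑ j, (k j : ℝ) * (Real.log (y j) + b) := by
      rw [Finset.mul_sum]
      refine Finset.sum_congr rfl fun j _ => ?_
      have hq : q j = (Real.log (y j) + b) / b := by
        simp only [hqdef]
        rw [add_div, div_self (ne_of_gt hb0)]
        ring
      rw [hq]
      ring
    have h2 : ∑ j, (k j : ℝ) * (Real.log (y j) + b)
        = Real.log (x k) - θ k + Real.log (confC k) + b := by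
      have h1' := hlogx k hk
      rw [hloga] at h1'
      have h2' : ∑ j, (k j : ℝ) * Real.log (y j / a)
          = ∑ j, (k j : ℝ) * (Real.log (y j) + b) :=
        Finset.sum_congr rfl fun j _ => by rw [hlog_quot j]
      rw [h2'] at h1'
      linarith
    have h3 : Real.log (x k) ≤ Real.log B := Real.log_le_log (hx k hk) (hxB k hk)
    have h4 : -(m:ℝ) ≤ θ k := neg_le_of_abs_le (hθb k (Finset.mem_of_mem_erase hk))
    have h5 : Real.log (confC k) ≤ cm := hck k (Finset.mem_of_mem_erase hk)
    rw [h1, h2]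
    have h6 : Real.log (x k) - θ k + Real.log (confC k) + b
        ≤ Real.log B + cm + m + b := by linarith
    calc (1 / b) * (Real.log (x k) - θ k + Real.log (confC k) + b)
        ≤ (1 / b) * (Real.log B + cm + m + b) := by
          apply mul_le_mul_of_nonneg_left h6 (by positivity)
    _ = 1 + t := by
          rw [htdef]
          field_simp
          ring
  set q' : I → ℝ := fun i => q i - t with hq'def
  have hfeas : ∀ k ∈ K, ∑ i', (k i' : ℝ) * q' i' ≤ 1 := by
    intro k hk
    have hsplit : ∑ i', (k i' : ℝ) * q' i'
        = (∑ i', (k i' : ℝ) * q i') - (∑ i', (k i' : ℝ)) * t := by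
      simp only [hq'def, mul_sub]
      rw [Finset.sum_sub_distrib, ← Finset.sum_mul]
    have hk1 : (1:ℝ) ≤ ∑ i', (k i' : ℝ) := by
      obtain ⟨hk0, _⟩ := Finset.mem_erase.mp hk
      obtain ⟨i, hi⟩ := exists_pos_of_ne_zero hk0
      have h1 : (1:ℝ) ≤ (k i : ℝ) := by exact_mod_cast hi
      refine le_trans h1 ?_
      exact Finset.single_le_sum (f := fun j => ((k j : ℝ))) (fun _ _ => Nat.cast_nonneg _)
        (mem_univ i)
    have hd := hdual k hk
    rw [hsplit]
    nlinarith
  have hLP := LP_lower Kbar hunit ρ (fun i => (hρ i).le) q' hfeas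
  -- Step 8: conclusion
  have hX : ∑ k ∈ K, x k * (θ k - 1) ≤ (N : ℝ) * B * ((m : ℝ) + 1) := by
    calc ∑ k ∈ K, x k * (θ k - 1) ≤ ∑ _k ∈ K, B * ((m:ℝ) + 1) := by
          apply Finset.sum_le_sum
          intro k hk
          have h1 := hxB k hk
          have h2 := hx k hk
          have h3 : θ k ≤ m := le_of_abs_le (hθb k (Finset.mem_of_mem_erase hk))
          nlinarith
    _ = (N : ℝ) * B * ((m : ℝ) + 1) := by
          rw [Finset.sum_const, nsmul_eq_mul, ← hNdef]
          ring
  have hdiffsum : ∑ j, ρh j * q j - ∑ j, ρ j * q' j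
      ≤ (Fintype.card I : ℝ) * Q * η + t * S := by
    have hsplit : ∑ j, ρh j * q j - ∑ j, ρ j * q' j
        = (∑ j, (ρh j - ρ j) * q j) + (∑ j, ρ j) * t := by
      simp only [hq'def]
      rw [Finset.sum_mul, ← Finset.sum_sub_distrib]
      rw [← Finset.sum_add_distrib]
      exact Finset.sum_congr rfl fun j _ => by ring
    rw [hsplit, ← hSdef]
    have hterm : ∀ j ∈ univ, (ρh j - ρ j) * q j ≤ Q * η := by
      intro j _
      calc (ρh j - ρ j) * q j ≤ |(ρh j - ρ j) * q j| := le_abs_self _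
      _ = |ρh j - ρ j| * |q j| := abs_mul _ _
      _ ≤ η * Q := mul_le_mul (hcons j) (hqabs j) (abs_nonneg _) hη0
      _ = Q * η := mul_comm _ _
    have hsum : ∑ j, (ρh j - ρ j) * q j ≤ ∑ _j : I, Q * η := Finset.sum_le_sum hterm
    rw [Finset.sum_const, Finset.card_univ, nsmul_eq_mul] at hsum
    linarith
  have hQ0 : 0 ≤ Q := by
    rw [hQdef]
    have : (0:ℝ) ≤ (m:ℝ) := Nat.cast_nonneg m
    linarith
  have hts : t * S = (Real.log B + cm + m) * S / b := by
    rw [htdef]; ring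
  have hC1div : ((N:ℝ) * B * ((m:ℝ) + 1) + (Real.log B + cm + (m:ℝ)) * S) / b
      = (N:ℝ) * B * ((m:ℝ) + 1) / b + (Real.log B + cm + (m:ℝ)) * S / b := add_div _ _ _
  have h1b : (1 / b) * (∑ k ∈ K, x k * (θ k - 1)) ≤ (N:ℝ) * B * ((m:ℝ) + 1) / b := by
    calc (1 / b) * (∑ k ∈ K, x k * (θ k - 1))
        ≤ (1 / b) * ((N:ℝ) * B * ((m:ℝ) + 1)) :=
          mul_le_mul_of_nonneg_left hX (by positivity)
    _ = (N:ℝ) * B * ((m:ℝ) + 1) / b := by ring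
  have s1 : Lfun Kbar a x - LPvalue Kbar ρ
      ≤ 1 / b * (∑ k ∈ K, x k * (θ k - 1))
        + ((∑ j, ρh j * q j) - ∑ j, ρ j * q' j) := by
    rw [hLfun]
    linarith [hLP]
  have s2 : 1 / b * (∑ k ∈ K, x k * (θ k - 1))
        + ((∑ j, ρh j * q j) - ∑ j, ρ j * q' j)
      ≤ (N:ℝ) * B * ((m:ℝ) + 1) / b + ((Fintype.card I : ℝ) * Q * η + t * S) :=
    add_le_add h1b hdiffsum
  have s3 := le_trans s1 s2
  linarith only [hts, hC1div, s3]

end helperSec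

/-- Lemma `lem-close-to-opt2`: for any `γ > 0` there is `δ₁ > 0` such
that for all sufficiently large `r`, with `a = r^{p−1}`: if `x` has positive coordinates,
nearly satisfies the conservation laws, and `|χ_{k,k',i}(x)| ≤ δ₁` for all pairs of edges,
then `L^(a)(x) − L* ≤ γ`. -/
theorem L_close_to_LPvalue
    {I : Type*} [Fintype I] [DecidableEq I] [Nonempty I]
    (Kbar : Finset (I → ℕ))
    (h0 : (0 : I → ℕ) ∈ Kbar)
    (hunit : ∀ i : I, Pi.single i 1 ∈ Kbar)
    (hmono : ∀ k ∈ Kbar, ∀ k' : I → ℕ, (∀ i, k' i ≤ k i) → k' ∈ Kbar)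
    (ρ : I → ℝ) (hρ : ∀ i, 0 < ρ i)
    (p ε : ℝ) (hp : p ∈ Set.Ioo (0 : ℝ) 1) (hε : ε ∈ Set.Ioo (0 : ℝ) (1/2))
    (γ : ℝ) (hγ : 0 < γ) :
    ∃ δ₁ > (0 : ℝ), ∃ r₀ : ℝ, ∀ r : ℝ, r₀ ≤ r →
      ∀ x : (I → ℕ) → ℝ, (∀ k ∈ Kbar.erase 0, 0 < x k) →
        (∀ i : I, |∑ k ∈ Kbar.erase 0, (k i : ℝ) * x k - ρ i| ≤
          r ^ (-(1 : ℝ)/2 + ε) / (Fintype.card I : ℝ)) →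
        (∀ i : I, ∀ k k' : I → ℕ, isEdge Kbar k i → isEdge Kbar k' i →
          |chiDef (r ^ (p - 1)) x k k' i| ≤ δ₁) →
        Lfun Kbar (r ^ (p - 1)) x - LPvalue Kbar ρ ≤ γ := by
  classical
  obtain ⟨C1, C2, hmain⟩ := main_bound Kbar h0 hunit hmono ρ hρ
  refine ⟨1, one_pos, ?_⟩
  have h1p : (0:ℝ) < 1 - p := by have := hp.2; linarith
  set bf : ℝ → ℝ := fun r => (1 - p) * Real.log r with hbfdef
  set ηf : ℝ → ℝ := fun r => r ^ (-(1:ℝ)/2 + ε) with hηfdef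
  have hb_t : Tendsto bf atTop atTop := Real.tendsto_log_atTop.const_mul_atTop h1p
  have hη_t : Tendsto ηf atTop (nhds 0) := by
    have hex : (-(1:ℝ)/2 + ε) = -((1:ℝ)/2 - ε) := by ring
    have h2 : (0:ℝ) < (1:ℝ)/2 - ε := by have := hε.2; linarith
    simp only [hηfdef, hex]
    exact tendsto_rpow_neg_atTop h2
  set ρmin : ℝ := univ.inf' univ_nonempty ρ with hρmindef
  have hρminpos : 0 < ρmin := (Finset.lt_inf'_iff _).mpr (fun i _ => hρ i)
  have hρminle : ∀ i, ρmin ≤ ρ i := fun i => Finset.inf'_le _ (mem_univ i)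
  have E1 : ∀ᶠ r : ℝ in atTop, (1:ℝ) ≤ r := eventually_ge_atTop 1
  have E2 : ∀ᶠ r : ℝ in atTop, 1 ≤ bf r := hb_t.eventually_ge_atTop 1
  have E3 : ∀ᶠ r : ℝ in atTop, ηf r < ρmin / 2 :=
    hη_t.eventually (gt_mem_nhds (by linarith))
  have hsum_t : Tendsto (fun r => C1 / bf r + C2 * ηf r) atTop (nhds 0) := by
    have t1 : Tendsto (fun r => C1 / bf r) atTop (nhds 0) := by
      have := hb_t.inv_tendsto_atTop
      have h2 := this.const_mul C1
      simpa [div_eq_mul_inv] using h2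
    have t2 : Tendsto (fun r => C2 * ηf r) atTop (nhds 0) := by
      simpa using hη_t.const_mul C2
    simpa using t1.add t2
  have E4 : ∀ᶠ r : ℝ in atTop, C1 / bf r + C2 * ηf r < γ :=
    hsum_t.eventually (gt_mem_nhds hγ)
  obtain ⟨r₀, hr₀⟩ := (((E1.and E2).and E3).and E4).exists_forall_of_atTop
  refine ⟨r₀, ?_⟩
  intro r hr x hx hcons hchi
  obtain ⟨⟨⟨hr1, hbr⟩, hηr⟩, hγr⟩ := hr₀ r hr
  have hr0 : (0:ℝ) < r := lt_of_lt_of_le one_pos hr1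
  have ha : r ^ (p - 1) = Real.exp (-(bf r)) := by
    rw [Real.rpow_def_of_pos hr0]
    congr 1
    simp only [hbfdef]
    ring
  have hη0 : 0 ≤ ηf r := Real.rpow_nonneg (le_of_lt hr0) _
  have hη2 : ∀ i, 2 * ηf r ≤ ρ i := by
    intro i
    have := hρminle i
    linarith
  have hcard1 : (1:ℝ) ≤ (Fintype.card I : ℝ) := by
    exact_mod_cast Fintype.card_pos
  have hcons' : ∀ i : I, |∑ k ∈ Kbar.erase 0, (k i : ℝ) * x k - ρ i| ≤ ηf r := by
    intro i
    refine le_trans (hcons i) ?_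
    exact div_le_self hη0 hcard1
  have hchi' : ∀ i : I, ∀ k k' : I → ℕ, isEdge Kbar k i → isEdge Kbar k' i →
      |chiDef (Real.exp (-(bf r))) x k k' i| ≤ 1 := by
    intro i k k' he1 he2
    rw [← ha]
    exact hchi i k k' he1 he2
  have := hmain (Real.exp (-(bf r))) (bf r) (ηf r) hbr rfl hη0 hη2 x hx hcons' hchi'
  rw [← ha] at this
  linarith
end

section
/- For every real ν > 0 and every real w with 0 ≤ w ≤ ν, the inequality w + (ν + w)·log(ν/(ν + w)) ≤ −w²/(4ν) holds. -/
open Real Set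

lemma half_le_log (x : ℝ) (h0 : 0 ≤ x) (h1 : x ≤ 1) : x / 2 ≤ Real.log (1 + x) := by
  have hx : (0:ℝ) < 1 + x := by linarith
  rw [Real.le_log_iff_exp_le hx]
  have h2 : 1 - x/2 ≤ Real.exp (-(x/2)) := by
    have := Real.add_one_le_exp (-(x/2)); linarith
  have hpos : (0:ℝ) < 1 - x/2 := by linarith
  have : Real.exp (x/2) ≤ 1 / (1 - x/2) := by
    rw [le_div_iff₀ hpos]
    calc Real.exp (x/2) * (1 - x/2) ≤ Real.exp (x/2) * Real.exp (-(x/2)) := by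
          exact mul_le_mul_of_nonneg_left h2 (Real.exp_pos _).le
      _ = 1 := by rw [← Real.exp_add]; simp
  refine this.trans ?_
  rw [div_le_iff₀ hpos]
  nlinarith

lemma g_hasDerivAt (x : ℝ) (hx : 0 < 1 + x) :
    HasDerivAt (fun t : ℝ => (1+t) * Real.log (1+t) - t - t^2/4)
      (Real.log (1+x) - x/2) x := by
  have h1 : HasDerivAt (fun t : ℝ => 1 + t) 1 x := by
    simpa using (hasDerivAt_id x).const_add 1
  have hlog : HasDerivAt (fun t : ℝ => Real.log (1+t)) (1/(1+x)) x := by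
    exact ((Real.hasDerivAt_log hx.ne').comp x h1).congr_deriv (by ring)
  have hmul := h1.mul hlog
  have hsq : HasDerivAt (fun t : ℝ => t^2/4) (x/2) x := by
    have := (hasDerivAt_pow 2 x).div_const 4
    simpa using this.congr_deriv (by ring)
  have := (hmul.sub (hasDerivAt_id x)).sub hsq
  refine this.congr_deriv ?_
  simp only [one_mul, one_div, mul_inv_cancel₀ hx.ne']; ring

lemma key (t : ℝ) (h0 : 0 ≤ t) (h1 : t ≤ 1) :
    t + t^2/4 ≤ (1+t) * Real.log (1+t) := by
  set g : ℝ → ℝ := fun t => (1+t) * Real.log (1+t) - t - t^2/4 with hg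
  have hmono : MonotoneOn g (Icc (0:ℝ) 1) := by
    apply monotoneOn_of_deriv_nonneg (convex_Icc 0 1)
    · apply ContinuousOn.sub
      apply ContinuousOn.sub
      · exact (continuousOn_const.add continuousOn_id).mul
          ((continuousOn_const.add continuousOn_id).log (fun x hx => by
            simp only [mem_Icc] at hx; intro h; simp at h; linarith [hx.1]))
      · exact continuousOn_id
      · exact (continuousOn_pow 2).div_const 4
    · intro x hx
      rw [interior_Icc] at hx
      exact ((g_hasDerivAt x (by linarith [hx.1])).differentiableAt).differentiableWithinAt
    · intro x hx
      rw [interior_Icc] at hx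
      rw [(g_hasDerivAt x (by linarith [hx.1])).deriv]
      have := half_le_log x hx.1.le hx.2.le
      linarith
  have h := hmono (left_mem_Icc.mpr zero_le_one) (mem_Icc.mpr ⟨h0, h1⟩) h0
  simp only [hg] at h
  simp at h
  nlinarith [h]

/-- key real-analytic inequality behind the Poisson concentration bound:
for `ν > 0` and `0 ≤ w ≤ ν`, `w + (ν + w)·log(ν/(ν + w)) ≤ −w²/(4ν)`. -/
theorem log_inequality_poisson (ν w : ℝ) (hν : 0 < ν) (hw0 : 0 ≤ w) (hw : w ≤ ν) :
    w + (ν + w) * Real.log (ν / (ν + w)) ≤ -(w ^ 2) / (4 * ν) := by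
  have hνw : 0 < ν + w := by linarith
  have hkey := key (w/ν) (by positivity) (by rw [div_le_one hν]; exact hw)
  have h1 : (1 : ℝ) + w/ν = (ν+w)/ν := by field_simp
  have h2 : Real.log (ν / (ν + w)) = - Real.log ((ν+w)/ν) := by
    rw [← Real.log_inv, inv_div]
  rw [h1] at hkey
  rw [h2]
  have hlog := hkey
  -- multiply through by ν
  have : w + (ν+w) * Real.log ((ν+w)/ν) * (-1) ≤ -(w^2)/(4*ν) := by
    have hmul : ν * (w/ν + (w/ν)^2/4) ≤ ν * ((ν+w)/ν * Real.log ((ν+w)/ν)) :=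
      mul_le_mul_of_nonneg_left hkey hν.le
    have e1 : ν * ((ν+w)/ν * Real.log ((ν+w)/ν)) = (ν+w) * Real.log ((ν+w)/ν) := by
      field_simp
    have e2 : ν * (w/ν + (w/ν)^2/4) = w + w^2/(4*ν) := by
      field_simp
    rw [e1, e2] at hmul
    have : -(w^2)/(4*ν) = -(w^2/(4*ν)) := by ring
    linarith [hmul]
  linarith [this]
end
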